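/- Let k be a field, V a nonzero finite-dimensional k-vector space, and Δ : End(V) → End(V ⊗ V) a unital k-algebra homomorphism which is coassociative, i.e. the two unital algebra homomorphisms End(V) → End(V ⊗ V ⊗ V) obtained by following Δ with Δ applied to the first, respectively the second, End(V) tensor factor of End(V ⊗ V) ≅ End(V) ⊗ End(V) coincide. Then there exist a finite-dimensional k-vector space M, a k-linear isomorphism F : V ⊗ M → V ⊗ V and a k-linear automorphism Φ of M ⊗ M such that (F, Φ) satisfies the modified pentagon equation and Δ(x) = F ∘ (x ⊗ id_M) ∘ F⁻¹ for all x ∈ End(V). -/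

import Mathlib

open TensorProduct

noncomputable section

variable {k : Type*} [Field k]

/-- Apply `G` to tensor factors 1 and 2 of a triple tensor product. -/
def m12 {A B C P Q : Type*}
    [AddCommGroup A] [AddCommGroup B] [AddCommGroup C] [AddCommGroup P] [AddCommGroup Q]
    [Module k A] [Module k B] [Module k C] [Module k P] [Module k Q]
    (G : A ⊗[k] B →ₗ[k] P ⊗[k] Q) :
    A ⊗[k] (B ⊗[k] C) →ₗ[k] P ⊗[k] (Q ⊗[k] C) :=
  (TensorProduct.assoc k P Q C).toLinearMap ∘ₗ G.rTensor C ∘ₗ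
    (TensorProduct.assoc k A B C).symm.toLinearMap

/-- Apply `G` to tensor factors 2 and 3 of a triple tensor product. -/
def m23 {A B C Q R : Type*}
    [AddCommGroup A] [AddCommGroup B] [AddCommGroup C] [AddCommGroup Q] [AddCommGroup R]
    [Module k A] [Module k B] [Module k C] [Module k Q] [Module k R]
    (G : B ⊗[k] C →ₗ[k] Q ⊗[k] R) :
    A ⊗[k] (B ⊗[k] C) →ₗ[k] A ⊗[k] (Q ⊗[k] R) :=
  G.lTensor A

/-- Apply `G` to tensor factors 1 and 3 of a triple tensor product. -/
def m13 {A B C P R : Type*}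
    [AddCommGroup A] [AddCommGroup B] [AddCommGroup C] [AddCommGroup P] [AddCommGroup R]
    [Module k A] [Module k B] [Module k C] [Module k P] [Module k R]
    (G : A ⊗[k] C →ₗ[k] P ⊗[k] R) :
    A ⊗[k] (B ⊗[k] C) →ₗ[k] P ⊗[k] (B ⊗[k] R) :=
  ((TensorProduct.comm k R B).toLinearMap.lTensor P) ∘ₗ
    (TensorProduct.assoc k P R B).toLinearMap ∘ₗ G.rTensor B ∘ₗ
    (TensorProduct.assoc k A C B).symm.toLinearMap ∘ₗ
    ((TensorProduct.comm k B C).toLinearMap.lTensor A)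

/-- The modified pentagon equation for a pair `(F, Φ)`:
`F₁₂ ∘ F₁₃ ∘ Φ₂₃ = F₂₃ ∘ F₁₂` as maps `V ⊗ M ⊗ M → V ⊗ V ⊗ V`. -/
def MPE {V M : Type*} [AddCommGroup V] [AddCommGroup M] [Module k V] [Module k M]
    (F : V ⊗[k] M →ₗ[k] V ⊗[k] V) (Φ : M ⊗[k] M →ₗ[k] M ⊗[k] M) : Prop :=
  m12 F ∘ₗ m13 F ∘ₗ m23 Φ = m23 F ∘ₗ m12 F

/-- The pentagon equation: `Φ₁₂ ∘ Φ₁₃ ∘ Φ₂₃ = Φ₂₃ ∘ Φ₁₂` on `M ⊗ M ⊗ M`. -/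
def PE {M : Type*} [AddCommGroup M] [Module k M]
    (Φ : M ⊗[k] M →ₗ[k] M ⊗[k] M) : Prop :=
  m12 Φ ∘ₗ m13 Φ ∘ₗ m23 Φ = m23 Φ ∘ₗ m12 Φ

section mlemmas

variable {A B C P Q R P' Q' R' : Type*}
  [AddCommGroup A] [AddCommGroup B] [AddCommGroup C] [AddCommGroup P] [AddCommGroup Q]
  [AddCommGroup R] [AddCommGroup P'] [AddCommGroup Q'] [AddCommGroup R']
  [Module k A] [Module k B] [Module k C] [Module k P] [Module k Q] [Module k R]
  [Module k P'] [Module k Q'] [Module k R']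

lemma esymm_comp (e : A ≃ₗ[k] B) : e.symm.toLinearMap ∘ₗ e.toLinearMap = LinearMap.id := by
  ext t; simp

lemma m12_comp (G : P' ⊗[k] Q' →ₗ[k] P ⊗[k] Q) (H : A ⊗[k] B →ₗ[k] P' ⊗[k] Q') :
    m12 (k := k) (C := C) (G ∘ₗ H) = m12 G ∘ₗ m12 H := by
  apply LinearMap.ext; intro t
  simp [m12, LinearMap.rTensor_comp]

lemma m23_comp (G : Q' ⊗[k] R' →ₗ[k] Q ⊗[k] R) (H : B ⊗[k] C →ₗ[k] Q' ⊗[k] R') :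
    m23 (k := k) (A := A) (G ∘ₗ H) = m23 G ∘ₗ m23 H := by
  simp [m23, LinearMap.lTensor_comp]

lemma comm_comp_comm :
    (TensorProduct.comm k A B).toLinearMap ∘ₗ (TensorProduct.comm k B A).toLinearMap
      = LinearMap.id := by
  apply TensorProduct.ext'; intro x y; simp

lemma m13_comp (G : P' ⊗[k] R' →ₗ[k] P ⊗[k] R) (H : A ⊗[k] C →ₗ[k] P' ⊗[k] R') :
    m13 (k := k) (B := B) (G ∘ₗ H) = m13 G ∘ₗ m13 H := by
  apply LinearMap.ext; intro t
  simp only [m13, LinearMap.comp_apply, LinearMap.rTensor_comp, LinearEquiv.coe_coe]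
  congr 2
  rw [← LinearMap.comp_apply (f := (TensorProduct.comm k B R').toLinearMap.lTensor P'),
    ← LinearMap.lTensor_comp, comm_comp_comm, LinearMap.lTensor_id]
  simp

lemma m12_id : m12 (k := k) (C := C) (LinearMap.id : A ⊗[k] B →ₗ[k] A ⊗[k] B) = LinearMap.id := by
  apply LinearMap.ext; intro t; simp [m12]

lemma m23_id : m23 (k := k) (A := A) (LinearMap.id : B ⊗[k] C →ₗ[k] B ⊗[k] C) = LinearMap.id := by
  simp [m23]

lemma m13_id : m13 (k := k) (B := B) (LinearMap.id : A ⊗[k] C →ₗ[k] A ⊗[k] C) = LinearMap.id := by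
  apply LinearMap.ext; intro t
  simp only [m13, LinearMap.comp_apply, LinearMap.rTensor_id, LinearMap.id_apply,
    LinearEquiv.coe_coe, LinearEquiv.apply_symm_apply]
  rw [← LinearMap.comp_apply, ← LinearMap.lTensor_comp, comm_comp_comm, LinearMap.lTensor_id]
  simp

lemma m12_map (a : A →ₗ[k] P) (b : B →ₗ[k] Q) :
    m12 (k := k) (C := C) (TensorProduct.map a b)
      = TensorProduct.map a (TensorProduct.map b LinearMap.id) := by
  apply TensorProduct.ext'; intro x t
  induction t with
  | zero => simp
  | tmul y z => simp [m12]
  | add s t hs ht => simp only [tmul_add, map_add, hs, ht]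

lemma m13_map (a : A →ₗ[k] P) (c : C →ₗ[k] R) :
    m13 (k := k) (B := B) (TensorProduct.map a c)
      = TensorProduct.map a (TensorProduct.map LinearMap.id c) := by
  apply TensorProduct.ext'; intro x t
  induction t with
  | zero => simp
  | tmul y z => simp [m13]
  | add s t hs ht => simp only [tmul_add, map_add, hs, ht]

lemma m23_map (b : B →ₗ[k] Q) (c : C →ₗ[k] R) :
    m23 (k := k) (A := A) (TensorProduct.map b c)
      = TensorProduct.map LinearMap.id (TensorProduct.map b c) := by
  apply TensorProduct.ext'; intro x t
  induction t with
  | zero => simp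
  | tmul y z => simp [m23]
  | add s t hs ht => simp only [tmul_add, map_add, hs, ht]

lemma m12_zero : m12 (k := k) (C := C) (0 : A ⊗[k] B →ₗ[k] P ⊗[k] Q) = 0 := by
  apply LinearMap.ext; intro t
  simp [m12, LinearMap.rTensor]

lemma m12_add (G H : A ⊗[k] B →ₗ[k] P ⊗[k] Q) :
    m12 (k := k) (C := C) (G + H) = m12 G + m12 H := by
  apply LinearMap.ext; intro t
  simp [m12, LinearMap.rTensor_add]

lemma m13_zero : m13 (k := k) (B := B) (0 : A ⊗[k] C →ₗ[k] P ⊗[k] R) = 0 := by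
  apply LinearMap.ext; intro t
  simp [m13]

lemma m13_add (G H : A ⊗[k] C →ₗ[k] P ⊗[k] R) :
    m13 (k := k) (B := B) (G + H) = m13 G + m13 H := by
  apply LinearMap.ext; intro t
  simp [m13]

lemma m12_rTensor (x : A →ₗ[k] P) :
    m12 (k := k) (C := C) (x.rTensor B) = x.rTensor (B ⊗[k] C) := by
  apply TensorProduct.ext'; intro a t
  induction t with
  | zero => simp
  | tmul y z => simp [m12]
  | add s t hs ht => simp only [tmul_add, map_add, hs, ht]

lemma m13_rTensor (x : A →ₗ[k] P) :
    m13 (k := k) (B := B) (x.rTensor C) = x.rTensor (B ⊗[k] C) := by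
  apply TensorProduct.ext'; intro a t
  induction t with
  | zero => simp
  | tmul y z => simp [m13]
  | add s t hs ht => simp only [tmul_add, map_add, hs, ht]

end mlemmas

set_option maxHeartbeats 1600000 in
/-- Any coassociative unital algebra homomorphism (comultiplication)
`Δ : End(V) → End(V ⊗ V)` is of the form `Δ(x) = F ∘ (x ⊗ id_M) ∘ F⁻¹` for some
finite-dimensional `M` and isomorphism `F : V ⊗ M → V ⊗ V` which together with some
automorphism `Φ` of `M ⊗ M` satisfies the modified pentagon equation. -/
theorem stmt3 {V : Type} [AddCommGroup V] [Module k V] [FiniteDimensional k V] [Nontrivial V]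
    (Δ : Module.End k V →ₐ[k] Module.End k (V ⊗[k] V))
    -- coassociativity: `(I ⊗ Δ) ∘ Δ = (Δ ⊗ I) ∘ Δ` under `End(A) ⊗ End(B) ≅ End(A ⊗ B)`
    (hcoassoc : ∀ x : Module.End k V,
      homTensorHomEquiv k V (V ⊗[k] V) V (V ⊗[k] V)
          (Δ.toLinearMap.lTensor (Module.End k V)
            ((homTensorHomEquiv k V V V V).symm (Δ x))) =
        (TensorProduct.assoc k V V V).toLinearMap ∘ₗ
          homTensorHomEquiv k (V ⊗[k] V) V (V ⊗[k] V) V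
            (Δ.toLinearMap.rTensor (Module.End k V)
              ((homTensorHomEquiv k V V V V).symm (Δ x))) ∘ₗ
          (TensorProduct.assoc k V V V).symm.toLinearMap) :
    ∃ (M : Type) (_ : AddCommGroup M) (_ : Module k M),
      FiniteDimensional k M ∧
      ∃ (F : V ⊗[k] M ≃ₗ[k] V ⊗[k] V) (Φ : M ⊗[k] M ≃ₗ[k] M ⊗[k] M),
        MPE F.toLinearMap Φ.toLinearMap ∧
        ∀ x : Module.End k V, Δ x = F.toLinearMap ∘ₗ x.rTensor M ∘ₗ F.symm.toLinearMap := by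
  classical
  have hpos : 0 < Module.finrank k V := Module.finrank_pos
  set n := Module.finrank k V with hn
  let b : Module.Basis (Fin n) k V := Module.finBasis k V
  let i0 : Fin n := ⟨0, hpos⟩
  let ε : Fin n → (V →ₗ[k] k) := fun i => b.coord i
  let e : Fin n → Fin n → Module.End k V := fun i j => (ε j).smulRight (b i)
  have hco : ∀ j l : Fin n, ε j (b l) = if l = j then 1 else 0 := by
    intro j l
    simp [ε, Module.Basis.coord_apply, Module.Basis.repr_self, Finsupp.single_apply]
  have hε0 : ε i0 (b i0) = 1 := by rw [hco]; exact if_pos rfl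
  -- the linear map `v ↦ (w ↦ ε₀(w) • v)`
  let sm : V →ₗ[k] Module.End k V :=
    { toFun := fun v => (ε i0).smulRight v
      map_add' := fun u v => by ext w; simp
      map_smul' := fun c v => by
        ext w
        simp only [LinearMap.smulRight_apply, LinearMap.smul_apply, RingHom.id_apply]
        rw [smul_comm] }
  have sm_apply : ∀ (v w : V), sm v w = ε i0 w • v := fun _ _ => rfl
  let p : Module.End k V := e i0 i0
  have hpp : p * p = p := by
    ext w
    simp [p, e, Module.End.mul_apply, LinearMap.smulRight_apply, hε0, smul_smul]
  have hpe : ∀ i, p * e i0 i = e i0 i := by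
    intro i
    ext w
    simp [p, e, Module.End.mul_apply, LinearMap.smulRight_apply, hε0, smul_smul]
  have hee : ∀ i, e i i0 * e i0 i = e i i := by
    intro i
    ext w
    simp [e, Module.End.mul_apply, LinearMap.smulRight_apply, hε0, smul_smul]
  have hsum : (∑ i, e i i) = 1 := by
    ext w
    simp only [LinearMap.coe_sum, Finset.sum_apply, Module.End.one_apply]
    simpa [e, ε, LinearMap.smulRight_apply, Module.Basis.coord_apply] using b.sum_repr w
  have hxsm : ∀ (x : Module.End k V) (v : V), x * sm v = sm (x v) := by
    intro x v
    ext w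
    simp [sm_apply, Module.End.mul_apply]
  have hesm : ∀ (i : Fin n) (v : V), e i0 i * sm v = ε i v • p := by
    intro i v
    ext w
    simp [sm_apply, p, e, Module.End.mul_apply, LinearMap.smulRight_apply, smul_smul, mul_comm]
  -- the multiplicity space
  let Msub : Submodule k (V ⊗[k] V) := LinearMap.range (Δ p)
  let M : Type := ↥Msub
  have hM : ∀ m : M, Δ p (m : V ⊗[k] V) = (m : V ⊗[k] V) := by
    intro m
    obtain ⟨y, hy⟩ := m.2
    rw [← hy, ← Module.End.mul_apply, ← map_mul, hpp]
  -- the isomorphism F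
  let Fbil : V →ₗ[k] (M →ₗ[k] V ⊗[k] V) :=
    { toFun := fun v => (Δ (sm v)) ∘ₗ Msub.subtype
      map_add' := fun u v => by simp [map_add, LinearMap.add_comp]
      map_smul' := fun c v => by simp [map_smul, LinearMap.smul_comp] }
  let F0 : V ⊗[k] M →ₗ[k] V ⊗[k] V := TensorProduct.lift Fbil
  have hF0 : ∀ (v : V) (m : M), F0 (v ⊗ₜ m) = Δ (sm v) (m : V ⊗[k] V) := fun _ _ => rfl
  have hmem : ∀ (i : Fin n) (w : V ⊗[k] V), Δ (e i0 i) w ∈ Msub := by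
    intro i w
    exact ⟨Δ (e i0 i) w, by rw [← Module.End.mul_apply, ← map_mul, hpe]⟩
  let Gi : Fin n → (V ⊗[k] V →ₗ[k] M) := fun i =>
    LinearMap.codRestrict Msub (Δ (e i0 i)) (hmem i)
  let G0 : V ⊗[k] V →ₗ[k] V ⊗[k] M := ∑ i, (TensorProduct.mk k V M (b i)) ∘ₗ Gi i
  have hG0 : ∀ w, G0 w = ∑ i, b i ⊗ₜ (Gi i w : M) := by
    intro w; simp [G0, LinearMap.sum_apply]
  have hFG : F0 ∘ₗ G0 = LinearMap.id := by
    apply LinearMap.ext; intro w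
    rw [LinearMap.comp_apply, hG0, map_sum, LinearMap.id_apply]
    have : ∀ i, F0 (b i ⊗ₜ (Gi i w : M)) = Δ (e i i) w := by
      intro i
      rw [hF0]
      have h1 : ((Gi i w : M) : V ⊗[k] V) = Δ (e i0 i) w := rfl
      have h2 : sm (b i) = e i i0 := rfl
      rw [h1, h2, ← Module.End.mul_apply, ← map_mul, hee]
    rw [Finset.sum_congr rfl (fun i _ => this i)]
    rw [← LinearMap.sum_apply, ← map_sum, hsum, map_one, Module.End.one_apply]
  have hGF : G0 ∘ₗ F0 = LinearMap.id := by
    apply TensorProduct.ext'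
    intro v m
    rw [LinearMap.comp_apply, hF0, hG0, LinearMap.id_apply]
    have : ∀ i, (Gi i (Δ (sm v) (m : V ⊗[k] V)) : M) = ε i v • m := by
      intro i
      apply Subtype.ext
      have h1 : ((Gi i (Δ (sm v) (m : V ⊗[k] V)) : M) : V ⊗[k] V)
          = Δ (e i0 i) (Δ (sm v) (m : V ⊗[k] V)) := rfl
      rw [h1, ← Module.End.mul_apply, ← map_mul, hesm, map_smul]
      simp only [LinearMap.smul_apply, Submodule.coe_smul]
      rw [hM m]
      rfl
    rw [Finset.sum_congr rfl (fun i _ => by rw [this i])]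
    calc (∑ i, b i ⊗ₜ[k] (ε i v • m))
        = ∑ i, (ε i v • b i) ⊗ₜ[k] m := by
          refine Finset.sum_congr rfl (fun i _ => ?_)
          simp [tmul_smul, smul_tmul']
      _ = (∑ i, ε i v • b i) ⊗ₜ[k] m := by rw [sum_tmul]
      _ = v ⊗ₜ[k] m := by
          congr 1
          simpa [ε, Module.Basis.coord_apply] using b.sum_repr v
  let Fe : V ⊗[k] M ≃ₗ[k] V ⊗[k] V := LinearEquiv.ofLinear F0 G0 hFG hGF
  have hint : ∀ x : Module.End k V, Δ x ∘ₗ F0 = F0 ∘ₗ x.rTensor M := by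
    intro x
    apply TensorProduct.ext'
    intro v m
    simp only [LinearMap.comp_apply, LinearMap.rTensor_tmul, hF0]
    rw [← Module.End.mul_apply, ← map_mul, hxsm]
  have hint' : ∀ (x : Module.End k V) (t : V ⊗[k] M), Δ x (F0 t) = F0 (x.rTensor M t) := by
    intro x t
    exact LinearMap.congr_fun (hint x) t
  have hΔ : ∀ x : Module.End k V, Δ x = F0 ∘ₗ x.rTensor M ∘ₗ G0 := by
    intro x
    have : Δ x ∘ₗ (F0 ∘ₗ G0) = (F0 ∘ₗ x.rTensor M) ∘ₗ G0 := by
      rw [← LinearMap.comp_assoc, hint x]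
    rwa [hFG, LinearMap.comp_id, LinearMap.comp_assoc] at this
  -- the two canonical maps `V ⊗ M ⊗ M → V ⊗ V ⊗ V` and their inverses
  set Sm : V ⊗[k] (M ⊗[k] M) →ₗ[k] V ⊗[k] (V ⊗[k] V) := m12 F0 ∘ₗ m13 F0 with hSmdef
  set Tm : V ⊗[k] (M ⊗[k] M) →ₗ[k] V ⊗[k] (V ⊗[k] V) := m23 F0 ∘ₗ m12 F0 with hTmdef
  set Sinv : V ⊗[k] (V ⊗[k] V) →ₗ[k] V ⊗[k] (M ⊗[k] M) := m13 G0 ∘ₗ m12 G0 with hSinvdef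
  set Tinv : V ⊗[k] (V ⊗[k] V) →ₗ[k] V ⊗[k] (M ⊗[k] M) := m12 G0 ∘ₗ m23 G0 with hTinvdef
  have hSmSinv : Sm ∘ₗ Sinv = LinearMap.id := by
    rw [hSmdef, hSinvdef]
    calc (m12 F0 ∘ₗ m13 F0) ∘ₗ m13 G0 ∘ₗ m12 G0
        = m12 F0 ∘ₗ (m13 F0 ∘ₗ m13 G0) ∘ₗ m12 G0 := by
          simp only [LinearMap.comp_assoc]
      _ = LinearMap.id := by
          rw [← m13_comp, hFG, m13_id, LinearMap.id_comp, ← m12_comp, hFG, m12_id]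
  have hSinvSm : Sinv ∘ₗ Sm = LinearMap.id := by
    rw [hSmdef, hSinvdef]
    calc (m13 G0 ∘ₗ m12 G0) ∘ₗ m12 F0 ∘ₗ m13 F0
        = m13 G0 ∘ₗ (m12 G0 ∘ₗ m12 F0) ∘ₗ m13 F0 := by
          simp only [LinearMap.comp_assoc]
      _ = LinearMap.id := by
          rw [← m12_comp, hGF, m12_id, LinearMap.id_comp, ← m13_comp, hGF, m13_id]
  have hTmTinv : Tm ∘ₗ Tinv = LinearMap.id := by
    rw [hTmdef, hTinvdef]
    calc (m23 F0 ∘ₗ m12 F0) ∘ₗ m12 G0 ∘ₗ m23 G0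
        = m23 F0 ∘ₗ (m12 F0 ∘ₗ m12 G0) ∘ₗ m23 G0 := by
          simp only [LinearMap.comp_assoc]
      _ = LinearMap.id := by
          rw [← m12_comp, hFG, m12_id, LinearMap.id_comp, ← m23_comp, hFG, m23_id]
  have hTinvTm : Tinv ∘ₗ Tm = LinearMap.id := by
    rw [hTmdef, hTinvdef]
    calc (m12 G0 ∘ₗ m23 G0) ∘ₗ m23 F0 ∘ₗ m12 F0
        = m12 G0 ∘ₗ (m23 G0 ∘ₗ m23 F0) ∘ₗ m12 F0 := by
          simp only [LinearMap.comp_assoc]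
      _ = LinearMap.id := by
          rw [← m23_comp, hGF, m23_id, LinearMap.id_comp, ← m12_comp, hGF, m12_id]
  -- intertwining of `m23 F0` with `m12` of maps on `V ⊗ V`
  have hB : ∀ u : Module.End k V ⊗[k] Module.End k V,
      m23 (A := V) F0 ∘ₗ m12 ((homTensorHomEquiv k V V V V) u)
        = (homTensorHomEquiv k V (V ⊗[k] V) V (V ⊗[k] V))
            (Δ.toLinearMap.lTensor (Module.End k V) u) ∘ₗ m23 F0 := by
    intro u
    induction u with
    | zero =>
      simp only [LinearMap.map_zero, LinearEquiv.map_zero, m12_zero, LinearMap.comp_zero,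
        LinearMap.zero_comp]
    | tmul a c =>
      rw [homTensorHomEquiv_apply, homTensorHomMap_apply, m12_map, LinearMap.lTensor_tmul,
        homTensorHomEquiv_apply, homTensorHomMap_apply]
      apply TensorProduct.ext'
      intro v t
      simp only [LinearMap.comp_apply, map_tmul, m23, LinearMap.lTensor_tmul]
      rw [AlgHom.toLinearMap_apply, hint']
      rfl
    | add u v hu hv =>
      simp only [LinearMap.map_add, LinearEquiv.map_add, m12_add, LinearMap.comp_add,
        LinearMap.add_comp, hu, hv]
  -- intertwining of `m12 F0` with `m13` of maps on `V ⊗ V`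
  have hC : ∀ u : Module.End k V ⊗[k] Module.End k V,
      m12 (C := V) F0 ∘ₗ m13 ((homTensorHomEquiv k V V V V) u)
        = ((TensorProduct.assoc k V V V).toLinearMap ∘ₗ
            (homTensorHomEquiv k (V ⊗[k] V) V (V ⊗[k] V) V)
              (Δ.toLinearMap.rTensor (Module.End k V) u) ∘ₗ
            (TensorProduct.assoc k V V V).symm.toLinearMap) ∘ₗ m12 F0 := by
    intro u
    induction u with
    | zero =>
      simp only [LinearMap.map_zero, LinearEquiv.map_zero, m13_zero, LinearMap.comp_zero,
        LinearMap.zero_comp]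
    | tmul a c =>
      rw [homTensorHomEquiv_apply, homTensorHomMap_apply, m13_map, LinearMap.rTensor_tmul,
        homTensorHomEquiv_apply, homTensorHomMap_apply]
      have e1 : ∀ (v' : V) (m' : M) (w' : V),
          m12 (C := V) F0 (v' ⊗ₜ (m' ⊗ₜ w'))
            = (TensorProduct.assoc k V V V) ((F0 (v' ⊗ₜ m')) ⊗ₜ w') := by
        intro v' m' w'
        simp only [m12, LinearMap.comp_apply, LinearEquiv.coe_coe,
          TensorProduct.assoc_symm_tmul, LinearMap.rTensor_tmul]
      apply TensorProduct.ext'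
      intro v t
      induction t with
      | zero => simp
      | tmul m w =>
        simp only [LinearMap.comp_apply, map_tmul, LinearMap.id_apply, e1,
          LinearEquiv.coe_coe, LinearEquiv.symm_apply_apply, AlgHom.toLinearMap_apply,
          hint', LinearMap.rTensor_tmul]
      | add t1 t2 h1 h2 => simp only [tmul_add, map_add, h1, h2]
    | add u v hu hv =>
      simp only [LinearMap.map_add, LinearEquiv.map_add, m13_add, LinearMap.comp_add,
        LinearMap.add_comp, hu, hv]
  -- both `Sm` and `Tm` intertwine `x ⊗ 1 ⊗ 1` with the same endomorphism of `V ⊗ V ⊗ V`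
  have hTcomm : ∀ x : Module.End k V, Tm ∘ₗ x.rTensor (M ⊗[k] M)
      = (homTensorHomEquiv k V (V ⊗[k] V) V (V ⊗[k] V))
          (Δ.toLinearMap.lTensor (Module.End k V)
            ((homTensorHomEquiv k V V V V).symm (Δ x))) ∘ₗ Tm := by
    intro x
    have h1 : m12 (C := M) F0 ∘ₗ x.rTensor (M ⊗[k] M) = m12 (Δ x) ∘ₗ m12 F0 := by
      rw [← m12_rTensor x, ← m12_comp, ← hint, m12_comp]
    have h2 := hB ((homTensorHomEquiv k V V V V).symm (Δ x))
    rw [LinearEquiv.apply_symm_apply] at h2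
    rw [hTmdef]
    calc (m23 F0 ∘ₗ m12 F0) ∘ₗ x.rTensor (M ⊗[k] M)
        = m23 F0 ∘ₗ (m12 F0 ∘ₗ x.rTensor (M ⊗[k] M)) := by
          simp only [LinearMap.comp_assoc]
      _ = (m23 F0 ∘ₗ m12 (Δ x)) ∘ₗ m12 F0 := by
          rw [h1, ← LinearMap.comp_assoc]
      _ = _ := by rw [h2, LinearMap.comp_assoc]
  have hScomm : ∀ x : Module.End k V, Sm ∘ₗ x.rTensor (M ⊗[k] M)
      = (homTensorHomEquiv k V (V ⊗[k] V) V (V ⊗[k] V))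
          (Δ.toLinearMap.lTensor (Module.End k V)
            ((homTensorHomEquiv k V V V V).symm (Δ x))) ∘ₗ Sm := by
    intro x
    have h1 : m13 (B := M) F0 ∘ₗ x.rTensor (M ⊗[k] M) = m13 (Δ x) ∘ₗ m13 F0 := by
      rw [← m13_rTensor x, ← m13_comp, ← hint, m13_comp]
    have h2 := hC ((homTensorHomEquiv k V V V V).symm (Δ x))
    rw [LinearEquiv.apply_symm_apply] at h2
    rw [hSmdef]
    calc (m12 F0 ∘ₗ m13 F0) ∘ₗ x.rTensor (M ⊗[k] M)
        = m12 F0 ∘ₗ (m13 F0 ∘ₗ x.rTensor (M ⊗[k] M)) := by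
          simp only [LinearMap.comp_assoc]
      _ = (m12 F0 ∘ₗ m13 (Δ x)) ∘ₗ m13 F0 := by
          rw [h1, ← LinearMap.comp_assoc]
      _ = _ := by rw [h2, ← hcoassoc x, LinearMap.comp_assoc, ← hSmdef]
  -- hence `g := Sinv ∘ Tm` commutes with all `x ⊗ 1 ⊗ 1`
  have hSinvcomm : ∀ x : Module.End k V, x.rTensor (M ⊗[k] M) ∘ₗ Sinv
      = Sinv ∘ₗ (homTensorHomEquiv k V (V ⊗[k] V) V (V ⊗[k] V))
          (Δ.toLinearMap.lTensor (Module.End k V)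
            ((homTensorHomEquiv k V V V V).symm (Δ x))) := by
    intro x
    calc x.rTensor (M ⊗[k] M) ∘ₗ Sinv
        = (Sinv ∘ₗ Sm) ∘ₗ x.rTensor (M ⊗[k] M) ∘ₗ Sinv := by
          rw [hSinvSm, LinearMap.id_comp]
      _ = Sinv ∘ₗ (Sm ∘ₗ x.rTensor (M ⊗[k] M)) ∘ₗ Sinv := by
          simp only [LinearMap.comp_assoc]
      _ = Sinv ∘ₗ ((homTensorHomEquiv k V (V ⊗[k] V) V (V ⊗[k] V))
            (Δ.toLinearMap.lTensor (Module.End k V)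
              ((homTensorHomEquiv k V V V V).symm (Δ x))) ∘ₗ (Sm ∘ₗ Sinv)) := by
          rw [hScomm x]
          simp only [LinearMap.comp_assoc]
      _ = _ := by rw [hSmSinv, LinearMap.comp_id]
  have hTinvcomm : ∀ x : Module.End k V, x.rTensor (M ⊗[k] M) ∘ₗ Tinv
      = Tinv ∘ₗ (homTensorHomEquiv k V (V ⊗[k] V) V (V ⊗[k] V))
          (Δ.toLinearMap.lTensor (Module.End k V)
            ((homTensorHomEquiv k V V V V).symm (Δ x))) := by
    intro x
    calc x.rTensor (M ⊗[k] M) ∘ₗ Tinv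
        = (Tinv ∘ₗ Tm) ∘ₗ x.rTensor (M ⊗[k] M) ∘ₗ Tinv := by
          rw [hTinvTm, LinearMap.id_comp]
      _ = Tinv ∘ₗ (Tm ∘ₗ x.rTensor (M ⊗[k] M)) ∘ₗ Tinv := by
          simp only [LinearMap.comp_assoc]
      _ = Tinv ∘ₗ ((homTensorHomEquiv k V (V ⊗[k] V) V (V ⊗[k] V))
            (Δ.toLinearMap.lTensor (Module.End k V)
              ((homTensorHomEquiv k V V V V).symm (Δ x))) ∘ₗ (Tm ∘ₗ Tinv)) := by
          rw [hTcomm x]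
          simp only [LinearMap.comp_assoc]
      _ = _ := by rw [hTmTinv, LinearMap.comp_id]
  set g : V ⊗[k] (M ⊗[k] M) →ₗ[k] V ⊗[k] (M ⊗[k] M) := Sinv ∘ₗ Tm with hgdef
  set ginv : V ⊗[k] (M ⊗[k] M) →ₗ[k] V ⊗[k] (M ⊗[k] M) := Tinv ∘ₗ Sm with hginvdef
  have hgcomm : ∀ x : Module.End k V,
      g ∘ₗ x.rTensor (M ⊗[k] M) = x.rTensor (M ⊗[k] M) ∘ₗ g := by
    intro x
    rw [hgdef]
    calc (Sinv ∘ₗ Tm) ∘ₗ x.rTensor (M ⊗[k] M)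
        = Sinv ∘ₗ (Tm ∘ₗ x.rTensor (M ⊗[k] M)) := by simp only [LinearMap.comp_assoc]
      _ = (Sinv ∘ₗ _) ∘ₗ Tm := by rw [hTcomm x, ← LinearMap.comp_assoc]
      _ = (x.rTensor (M ⊗[k] M) ∘ₗ Sinv) ∘ₗ Tm := by rw [← hSinvcomm x]
      _ = x.rTensor (M ⊗[k] M) ∘ₗ (Sinv ∘ₗ Tm) := by simp only [LinearMap.comp_assoc]
  have hginvcomm : ∀ x : Module.End k V,
      ginv ∘ₗ x.rTensor (M ⊗[k] M) = x.rTensor (M ⊗[k] M) ∘ₗ ginv := by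
    intro x
    rw [hginvdef]
    calc (Tinv ∘ₗ Sm) ∘ₗ x.rTensor (M ⊗[k] M)
        = Tinv ∘ₗ (Sm ∘ₗ x.rTensor (M ⊗[k] M)) := by simp only [LinearMap.comp_assoc]
      _ = (Tinv ∘ₗ _) ∘ₗ Sm := by rw [hScomm x, ← LinearMap.comp_assoc]
      _ = (x.rTensor (M ⊗[k] M) ∘ₗ Tinv) ∘ₗ Sm := by rw [← hTinvcomm x]
      _ = x.rTensor (M ⊗[k] M) ∘ₗ (Tinv ∘ₗ Sm) := by simp only [LinearMap.comp_assoc]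
  have hgginv : g ∘ₗ ginv = LinearMap.id := by
    rw [hgdef, hginvdef]
    calc (Sinv ∘ₗ Tm) ∘ₗ Tinv ∘ₗ Sm
        = Sinv ∘ₗ (Tm ∘ₗ Tinv) ∘ₗ Sm := by simp only [LinearMap.comp_assoc]
      _ = LinearMap.id := by rw [hTmTinv, LinearMap.id_comp, hSinvSm]
  have hginvg : ginv ∘ₗ g = LinearMap.id := by
    rw [hgdef, hginvdef]
    calc (Tinv ∘ₗ Sm) ∘ₗ Sinv ∘ₗ Tm
        = Tinv ∘ₗ (Sm ∘ₗ Sinv) ∘ₗ Tm := by simp only [LinearMap.comp_assoc]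
      _ = LinearMap.id := by rw [hSmSinv, LinearMap.id_comp, hTinvTm]
  -- the commutant of `End(V) ⊗ 1` in `End(V ⊗ N)` is `1 ⊗ End(N)`
  set ctr : V ⊗[k] (M ⊗[k] M) →ₗ[k] M ⊗[k] M :=
    (TensorProduct.lid k (M ⊗[k] M)).toLinearMap ∘ₗ (ε i0).rTensor (M ⊗[k] M) with hctrdef
  have hctr : ∀ (w : V) (t : M ⊗[k] M), ctr (w ⊗ₜ t) = ε i0 w • t := by
    intro w t
    rw [hctrdef]
    simp [LinearMap.rTensor_tmul]
  have hsmrT : ∀ (v : V) (t : V ⊗[k] (M ⊗[k] M)),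
      (sm v).rTensor (M ⊗[k] M) t = v ⊗ₜ ctr t := by
    intro v t
    have h : (sm v).rTensor (M ⊗[k] M) = (TensorProduct.mk k V (M ⊗[k] M) v) ∘ₗ ctr := by
      apply TensorProduct.ext'
      intro w t
      simp only [LinearMap.rTensor_tmul, LinearMap.comp_apply, hctr, mk_apply, sm_apply]
      rw [tmul_smul, smul_tmul']
    rw [h]; rfl
  have key : ∀ h : V ⊗[k] (M ⊗[k] M) →ₗ[k] V ⊗[k] (M ⊗[k] M),
      (∀ x : Module.End k V, h ∘ₗ x.rTensor (M ⊗[k] M) = x.rTensor (M ⊗[k] M) ∘ₗ h) →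
      h = (ctr ∘ₗ h ∘ₗ TensorProduct.mk k V (M ⊗[k] M) (b i0)).lTensor V := by
    intro h hcomm
    apply TensorProduct.ext'
    intro v t
    have h1 : (sm v).rTensor (M ⊗[k] M) ((b i0) ⊗ₜ t) = v ⊗ₜ[k] t := by
      rw [LinearMap.rTensor_tmul, sm_apply, hε0, one_smul]
    calc h (v ⊗ₜ t) = h ((sm v).rTensor (M ⊗[k] M) ((b i0) ⊗ₜ t)) := by rw [h1]
      _ = (sm v).rTensor (M ⊗[k] M) (h ((b i0) ⊗ₜ t)) :=
          LinearMap.congr_fun (hcomm (sm v)) ((b i0) ⊗ₜ t)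
      _ = v ⊗ₜ ctr (h ((b i0) ⊗ₜ t)) := hsmrT v _
      _ = (ctr ∘ₗ h ∘ₗ TensorProduct.mk k V (M ⊗[k] M) (b i0)).lTensor V (v ⊗ₜ t) := by
          rw [LinearMap.lTensor_tmul]; rfl
  set φ : M ⊗[k] M →ₗ[k] M ⊗[k] M :=
    ctr ∘ₗ g ∘ₗ TensorProduct.mk k V (M ⊗[k] M) (b i0) with hφdef
  set ψ : M ⊗[k] M →ₗ[k] M ⊗[k] M :=
    ctr ∘ₗ ginv ∘ₗ TensorProduct.mk k V (M ⊗[k] M) (b i0) with hψdef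
  have hgφ : g = φ.lTensor V := key g hgcomm
  have hginvψ : ginv = ψ.lTensor V := key ginv hginvcomm
  have cancel : ∀ (α β : M ⊗[k] M →ₗ[k] M ⊗[k] M),
      α.lTensor V ∘ₗ β.lTensor V = LinearMap.id → α ∘ₗ β = LinearMap.id := by
    intro α β hαβ
    rw [← LinearMap.lTensor_comp] at hαβ
    apply LinearMap.ext
    intro t
    have h2 := LinearMap.congr_fun hαβ ((b i0) ⊗ₜ t)
    rw [LinearMap.lTensor_tmul, LinearMap.id_apply] at h2
    have h3 := congrArg ctr h2
    rw [hctr, hε0, one_smul, hctr, hε0, one_smul] at h3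
    exact h3
  have hφψ : φ ∘ₗ ψ = LinearMap.id := by
    apply cancel
    rw [← hgφ, ← hginvψ, hgginv]
  have hψφ : ψ ∘ₗ φ = LinearMap.id := by
    apply cancel
    rw [← hgφ, ← hginvψ, hginvg]
  let Φe : M ⊗[k] M ≃ₗ[k] M ⊗[k] M := LinearEquiv.ofLinear φ ψ hφψ hψφ
  refine ⟨M, inferInstance, inferInstance, inferInstance, Fe, Φe, ?_, ?_⟩
  · -- the modified pentagon equation
    show m12 F0 ∘ₗ m13 F0 ∘ₗ m23 φ = m23 F0 ∘ₗ m12 F0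
    have hm23φ : m23 (A := V) φ = φ.lTensor V := rfl
    rw [hm23φ, ← hgφ, hgdef, hTmdef, hSinvdef]
    calc m12 F0 ∘ₗ m13 F0 ∘ₗ (m13 G0 ∘ₗ m12 G0) ∘ₗ m23 F0 ∘ₗ m12 F0
        = m12 F0 ∘ₗ (m13 F0 ∘ₗ m13 G0) ∘ₗ m12 G0 ∘ₗ m23 F0 ∘ₗ m12 F0 := by
          simp only [LinearMap.comp_assoc]
      _ = (m12 F0 ∘ₗ m12 G0) ∘ₗ m23 F0 ∘ₗ m12 F0 := by
          rw [← m13_comp, hFG, m13_id, LinearMap.id_comp, ← LinearMap.comp_assoc]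
      _ = m23 F0 ∘ₗ m12 F0 := by
          rw [← m12_comp, hFG, m12_id, LinearMap.id_comp]
  · -- the form of Δ
    intro x
    exact hΔ x

end
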